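/- Let D be a strongly connected digraph on n ≥ 4 vertices in which every vertex x satisfies 2·deg(x) ≥ n + 1 (i.e., all vertex degrees are at least (n+1)/2). Then D has a noncritical vertex. -/

import Mathlib

/-- A digraph (given by its adjacency/arc relation `Adj`) is strongly connected if
every vertex can reach every other vertex by a directed path. -/
def IsStronglyConnected {V : Type*} (Adj : V → V → Prop) : Prop :=
  ∀ x y : V, Relation.ReflTransGen Adj x y

/-- The degree of a vertex `x`: the number of vertices `y ≠ x` joined to `x`
by an arc in at least one direction. -/
noncomputable def degree {V : Type*} (Adj : V → V → Prop) (x : V) : ℕ :=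
  {y : V | y ≠ x ∧ (Adj x y ∨ Adj y x)}.ncard

/-- A vertex `v` is noncritical if the digraph obtained by deleting `v`
(induced on the remaining vertices) is strongly connected. -/
def Noncritical {V : Type*} (Adj : V → V → Prop) (v : V) : Prop :=
  IsStronglyConnected (fun a b : {u : V // u ≠ v} => Adj a b)

open Relation Set

section Helpers

variable {V : Type*}

/-- The relation `Adj` restricted to a set `U`. -/
def RAdj (Adj : V → V → Prop) (U : Set V) : V → V → Prop :=
  fun a b => a ∈ U ∧ b ∈ U ∧ Adj a b

/-- Strong connectivity of the subdigraph induced on `U`. -/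
def SOn (Adj : V → V → Prop) (U : Set V) : Prop :=
  ∀ x ∈ U, ∀ y ∈ U, ReflTransGen (RAdj Adj U) x y

theorem rtg_expand {r r' : V → V → Prop} (h : ∀ a b, r a b → ReflTransGen r' a b)
    {x y : V} (hxy : ReflTransGen r x y) : ReflTransGen r' x y := by
  induction hxy with
  | refl => exact .refl
  | tail _ hbc ih => exact ih.trans (h _ _ hbc)

theorem rtg_mono_set {Adj : V → V → Prop} {U W : Set V} (hUW : U ⊆ W)
    {x y : V} (h : ReflTransGen (RAdj Adj U) x y) : ReflTransGen (RAdj Adj W) x y :=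
  ReflTransGen.mono (r := RAdj Adj U) (p := RAdj Adj W) (fun a b hr => ⟨hUW hr.1, hUW hr.2.1, hr.2.2⟩) x y h

theorem rtg_toSubtype {P : V → Prop} {R : V → V → Prop} {x y : V}
    (h : ReflTransGen (fun a b => P a ∧ P b ∧ R a b) x y) :
    ∀ (hx : P x) (hy : P y),
      ReflTransGen (fun a b : {u // P u} => R a b) ⟨x, hx⟩ ⟨y, hy⟩ := by
  induction h with
  | refl => intro hx hy; exact .refl
  | tail _ hbc ih => intro hx hy; exact (ih hx hbc.1).tail hbc.2.2

theorem rtg_ofSubtype {P : V → Prop} {R : V → V → Prop} {x y : {u // P u}}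
    (h : ReflTransGen (fun a b : {u // P u} => R a b) x y) :
    ReflTransGen (fun a b => P a ∧ P b ∧ R a b) x.1 y.1 :=
  ReflTransGen.lift (r := fun a b : {u // P u} => R a b) (p := fun a b => P a ∧ P b ∧ R a b) Subtype.val (fun a b hr => ⟨a.2, b.2, hr⟩) x y h

theorem noncritical_iff_SOn (Adj : V → V → Prop) (v : V) :
    Noncritical Adj v ↔ SOn Adj {v}ᶜ := by
  constructor
  · intro h x hx y hy
    have := rtg_ofSubtype (h ⟨x, hx⟩ ⟨y, hy⟩)
    exact this
  · intro h a b
    exact rtg_toSubtype (h a.1 a.2 b.1 b.2) a.2 b.2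

/-- Strong connectivity on a subtype transfers to the image set. -/
theorem SOn_val_image {P : V → Prop} {R : V → V → Prop} {X : Set {u // P u}}
    (h : SOn (fun a b : {u // P u} => R a b) X) : SOn R (Subtype.val '' X) := by
  rintro x ⟨a, ha, rfl⟩ y ⟨b, hb, rfl⟩
  exact ReflTransGen.lift (r := RAdj (fun a b : {u // P u} => R a b) X) (p := RAdj R (Subtype.val '' X)) Subtype.val
    (fun c d hr => ⟨⟨c, hr.1, rfl⟩, ⟨d, hr.2.1, rfl⟩, hr.2.2⟩) a b (h a ha b hb)

theorem SOn_of_anchor {Adj : V → V → Prop} {U : Set V} {a0 : V} (ha0 : a0 ∈ U)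
    (hto : ∀ u ∈ U, ReflTransGen (RAdj Adj U) u a0)
    (hfrom : ∀ u ∈ U, ReflTransGen (RAdj Adj U) a0 u) : SOn Adj U :=
  fun x hx y hy => (hto x hx).trans (hfrom y hy)

/-- Bypass lemma: if every "transit" through `s0` can be replaced by a walk
avoiding `s0`, then `D - s0` is strongly connected. -/
theorem bypass_strong {Adj : V → V → Prop} (hconn : IsStronglyConnected Adj)
    (hirr : ∀ x : V, ¬ Adj x x) (s0 : V)
    (hby : ∀ w w', Adj w s0 → Adj s0 w' → w ≠ s0 → w' ≠ s0 →
      ReflTransGen (RAdj Adj {s0}ᶜ) w w') :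
    SOn Adj {s0}ᶜ := by
  have key : ∀ {u v : V}, ReflTransGen Adj u v → u ≠ s0 →
      (v ≠ s0 → ReflTransGen (RAdj Adj {s0}ᶜ) u v) ∧
      (v = s0 → ∀ w', Adj s0 w' → w' ≠ s0 → ReflTransGen (RAdj Adj {s0}ᶜ) u w') := by
    intro u v h
    induction h with
    | refl => exact fun hu => ⟨fun _ => .refl, fun hv => absurd hv hu⟩
    | @tail b c hab hbc ih =>
      intro hu
      by_cases hb : b = s0
      · subst hb
        refine ⟨fun hc => (ih hu).2 rfl c hbc hc, fun hc => ?_⟩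
        exact absurd (hc ▸ hbc) (hirr _)
      · refine ⟨fun hc => ((ih hu).1 hb).tail ⟨hb, hc, hbc⟩, fun hc w' h1 h2 => ?_⟩
        subst hc
        exact ((ih hu).1 hb).trans (hby b w' hbc h1 hb h2)
  intro x hx y hy
  exact (key (hconn x y) hx).1 hy

end Helpers

section Handle

variable {V : Type*} [Fintype V] {Adj : V → V → Prop} {S : Set V} {f : ℕ → V} {m : ℕ}

/-- Walk along a segment of the handle. -/
theorem segment_walk (harc : ∀ t, t + 1 < m → Adj (f t) (f (t + 1)))
    (U : Set V) {p q : ℕ} (hpq : p ≤ q) (hq : q < m)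
    (hU : ∀ t, p ≤ t → t ≤ q → f t ∈ U) :
    ReflTransGen (RAdj Adj U) (f p) (f q) := by
  induction q, hpq using Nat.le_induction with
  | base => exact .refl
  | succ q hpq ih =>
    have hq' : q < m := Nat.lt_of_succ_lt hq
    exact (ih hq' (fun t ht ht' => hU t ht (Nat.le_succ_of_le ht'))).tail
      ⟨hU q hpq (Nat.le_succ q), hU (q + 1) (Nat.le_succ_of_le hpq) le_rfl, harc q hq⟩

theorem walk_to_S {y a : V} (hwalk : ReflTransGen Adj y a) :
    y ∉ S → a ∈ S →
    ∃ L : List V, L ≠ [] ∧ L.head? = some y ∧ L.Chain' Adj ∧ (∀ u ∈ L, u ∉ S) ∧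
      ∃ b ∈ S, ∃ z, L.getLast? = some z ∧ Adj z b := by
  induction hwalk using Relation.ReflTransGen.head_induction_on with
  | refl => intro hy ha; exact absurd ha hy
  | @head y' c hyc hca ih =>
    intro hy ha
    by_cases hc : c ∈ S
    · exact ⟨[y'], by simp, rfl, List.isChain_singleton _, by simpa using hy,
        c, hc, y', by simp, hyc⟩
    · obtain ⟨L', hne, hhead, hchain, hout, b, hbS, z, hlast, hzb⟩ := ih hc ha
      refine ⟨y' :: L', by simp, rfl, ?_, ?_, b, hbS, z, ?_, hzb⟩
      · unfold List.Chain'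
        rw [List.isChain_cons]
        exact ⟨fun w hw => by rw [hhead] at hw; exact (Option.some_inj.1 hw) ▸ hyc, hchain⟩
      · intro u hu
        rcases List.mem_cons.1 hu with h | h
        · exact h ▸ hy
        · exact hout u h
      · cases L' with
        | nil => simp at hhead
        | cons w l =>
          rw [← hlast]
          rfl

theorem dup_split {L : List V} (h : ¬ L.Nodup) :
    ∃ (a : V) (s t u : List V), L = s ++ a :: (t ++ a :: u) := by
  induction L with
  | nil => exact absurd List.nodup_nil h
  | cons b l ih =>
    by_cases hb : b ∈ l
    · obtain ⟨s, t, rfl⟩ := List.append_of_mem hb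
      exact ⟨b, [], s, t, by simp⟩
    · have : ¬ l.Nodup := fun hn => h (List.nodup_cons.2 ⟨hb, hn⟩)
      obtain ⟨a, s, t, u, rfl⟩ := ih this
      exact ⟨a, b :: s, t, u, by simp⟩

theorem dedup_chain : ∀ (N : ℕ) (L : List V), L.length ≤ N → L ≠ [] → L.Chain' Adj →
    ∃ L' : List V, L' ≠ [] ∧ L'.Nodup ∧ L'.Chain' Adj ∧ L'.head? = L.head? ∧
      L'.getLast? = L.getLast? ∧ ∀ u ∈ L', u ∈ L := by
  intro N
  induction N with
  | zero =>
    intro L hL hne _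
    cases L with
    | nil => exact absurd rfl hne
    | cons w l => simp at hL
  | succ N ih =>
    intro L hL hne hchain
    by_cases hnd : L.Nodup
    · exact ⟨L, hne, hnd, hchain, rfl, rfl, fun u hu => hu⟩
    · obtain ⟨a, s, t, u, rfl⟩ := dup_split hnd
      have hch1 : (s ++ a :: u).Chain' Adj := by
        unfold List.Chain' at hchain ⊢
        rw [List.isChain_split] at hchain ⊢
        refine ⟨hchain.1, ?_⟩
        have h2 := hchain.2
        have : (a :: (t ++ a :: u)) = (a :: t) ++ a :: u := by simp
        rw [this, List.isChain_split] at h2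
        exact h2.2
      have hlen : (s ++ a :: u).length ≤ N := by
        have := hL
        simp [List.length_append] at this ⊢
        omega
      have hne1 : s ++ a :: u ≠ [] := by simp
      obtain ⟨L', h1, h2, h3, h4, h5, h6⟩ := ih (s ++ a :: u) hlen hne1 hch1
      refine ⟨L', h1, h2, h3, ?_, ?_, ?_⟩
      · rw [h4]
        cases s with
        | nil => simp
        | cons w l => simp
      · rw [h5, List.getLast?_append_of_ne_nil s (by simp : (a :: u : List V) ≠ [])]
        have : (a :: (t ++ a :: u)) = (a :: t) ++ a :: u := by simp
        rw [this, ← List.append_assoc,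
          List.getLast?_append_of_ne_nil _ (by simp : (a :: u : List V) ≠ [])]
      · intro w hw
        have := h6 w hw
        simp at this ⊢
        tauto

/-- Existence of a handle: a nonempty path outside `S` entering and leaving `S`. -/
theorem exists_handle (hconn : IsStronglyConnected Adj)
    (hSne : S.Nonempty) (hproper : S ≠ univ) [Nonempty V] :
    ∃ (m : ℕ) (f : ℕ → V), 0 < m ∧
      (∀ t, t < m → f t ∉ S) ∧
      (∀ t t', t < m → t' < m → f t = f t' → t = t') ∧
      (∀ t, t + 1 < m → Adj (f t) (f (t + 1))) ∧
      (∃ s ∈ S, Adj s (f 0)) ∧ (∃ b ∈ S, Adj (f (m - 1)) b) := by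
  obtain ⟨a, haS⟩ := hSne
  obtain ⟨u0, hu0⟩ : ∃ u, u ∉ S := by
    by_contra h
    push_neg at h
    exact hproper (eq_univ_of_forall fun v => h v)
  have cross : ∃ s ∈ S, ∃ y, y ∉ S ∧ Adj s y := by
    have H : ∀ {x y : V}, ReflTransGen Adj x y → x ∈ S → y ∉ S →
        ∃ s ∈ S, ∃ z, z ∉ S ∧ Adj s z := by
      intro x y h
      induction h with
      | refl => intro hx hy; exact absurd hx hy
      | @tail b c hab hbc ih =>
        intro hx hy
        by_cases hb : b ∈ S
        · exact ⟨b, hb, c, hy, hbc⟩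
        · exact ih hx hb
    exact H (hconn a u0) haS hu0
  obtain ⟨s, hsS, y, hyS, hsy⟩ := cross
  obtain ⟨L, hne, hhead, hchain, hout, b, hbS, z, hlast, hzb⟩ :=
    walk_to_S (Adj := Adj) (S := S) (hconn y a) hyS haS
  obtain ⟨L', h1, h2, h3, h4, h5, h6⟩ := dedup_chain L.length L le_rfl hne hchain
  refine ⟨L'.length, fun t => L'.getD t (Classical.arbitrary V), List.length_pos_iff.2 h1,
    ?_, ?_, ?_, ?_, ?_⟩
  · intro t ht
    beta_reduce
    rw [List.getD_eq_getElem _ _ ht]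
    exact hout _ (h6 _ (L'.getElem_mem ht))
  · intro t t' ht ht' heq
    beta_reduce at heq
    rw [List.getD_eq_getElem _ _ ht, List.getD_eq_getElem _ _ ht'] at heq
    have h7 := List.nodup_iff_injective_getElem.1 h2
      (show L'[(⟨t, ht⟩ : Fin L'.length)] = L'[(⟨t', ht'⟩ : Fin L'.length)] from heq)
    exact Fin.mk.inj_iff.1 h7
  · intro t ht
    beta_reduce
    rw [List.getD_eq_getElem _ _ (Nat.lt_of_succ_lt ht), List.getD_eq_getElem _ _ ht]
    have := List.isChain_iff_getElem.1 h3 t (by omega)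
    simpa [List.get_eq_getElem] using this
  · refine ⟨s, hsS, ?_⟩
    beta_reduce
    rw [List.getD_eq_getElem _ _ (List.length_pos_iff.2 h1), ← List.head_eq_getElem_zero h1]
    have h7 : L'.head h1 = y := by
      have h8 := List.head?_eq_head h1
      rw [h4, hhead] at h8
      exact Option.some_inj.1 h8.symm
    rw [h7]
    exact hsy
  · refine ⟨b, hbS, ?_⟩
    beta_reduce
    have hlen1 : L'.length - 1 < L'.length := by
      have := List.length_pos_iff.2 h1; omega
    rw [List.getD_eq_getElem _ _ hlen1]
    rw [show L'[L'.length - 1] = L'.getLast h1 from (List.getLast_eq_getElem h1).symm]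
    have h7 : L'.getLast h1 = z := by
      have h8 := List.getLast?_eq_getLast_of_ne_nil h1
      rw [h5, hlast] at h8
      exact Option.some_inj.1 h8.symm
    rw [h7]
    exact hzb

end Handle


section MainProof

variable {V : Type*} [Fintype V]

/-- Virtual adjacency: real arcs plus the "shortcut" complete bipartite arcs A → B. -/
def virtAdj (Adj : V → V → Prop) (A B : Set V) : V → V → Prop :=
  fun a b => a ≠ b ∧ (Adj a b ∨ (a ∈ A ∧ b ∈ B))

theorem degree_le (Adj : V → V → Prop) (x : V) {T : Set V}
    (h : ∀ y, y ≠ x → Adj x y ∨ Adj y x → y ∈ T) : degree Adj x ≤ T.ncard :=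
  Set.ncard_le_ncard (fun y hy => h y hy.1 hy.2)

theorem m2_case {Adj : V → V → Prop} {S : Set V} {x1 x2 : V}
    (hirr : ∀ x : V, ¬ Adj x x) (hconn : IsStronglyConnected Adj)
    (hdeg : ∀ x : V, Fintype.card V + 1 ≤ 2 * degree Adj x)
    (hS : SOn Adj S) (hSne : S.Nonempty)
    (hn4 : 4 ≤ Fintype.card V)
    (hx1S : x1 ∉ S) (hx2S : x2 ∉ S) (h12 : x1 ≠ x2)
    (hcompl : ∀ u, u ∉ S → u = x1 ∨ u = x2)
    (h12arc : Adj x1 x2)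
    (hx1out : ∀ u, Adj x1 u → u = x2)
    (hx2in : ∀ u, Adj u x2 → u = x1)
    (IH : ∀ (W : Type u_1) [Fintype W] (AdjW : W → W → Prop),
      (∀ x : W, ¬ AdjW x x) → 4 ≤ Fintype.card W → Fintype.card W < Fintype.card V →
      IsStronglyConnected AdjW → (∀ x : W, Fintype.card W + 1 ≤ 2 * degree AdjW x) →
      ∃ v : W, Noncritical AdjW v) :
    ∃ v : V, Noncritical Adj v := by
  classical
  set n := Fintype.card V with hn
  set A : Set V := {s | s ∈ S ∧ Adj s x1} with hA
  set B : Set V := {s | s ∈ S ∧ Adj x2 s} with hB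
  set G : V → V → Prop := virtAdj Adj A B with hG
  have hAS : A ⊆ S := fun u hu => hu.1
  have hBS : B ⊆ S := fun u hu => hu.1
  -- cardinality of S
  have hScompl : Sᶜ = {x1, x2} := by
    ext u
    constructor
    · intro hu
      rcases hcompl u hu with h | h
      · exact Or.inl h
      · exact Or.inr h
    · intro hu
      rcases hu with h | h
      · exact h ▸ hx1S
      · exact h ▸ hx2S
  have hcardS : S.ncard + 2 = n := by
    have h1 : S.ncard + Sᶜ.ncard = n := by
      rw [Set.ncard_add_ncard_compl S, Nat.card_eq_fintype_card]
    rw [hScompl, Set.ncard_pair h12] at h1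
    exact h1
  -- degree bounds for A and B
  have hAcard : n ≤ 2 * A.ncard + 1 := by
    have h1 : degree Adj x1 ≤ (insert x2 A).ncard := by
      apply degree_le
      intro y hy harcs
      rcases harcs with h | h
      · exact (hx1out y h) ▸ Set.mem_insert _ _
      · by_cases hyS : y ∈ S
        · exact Set.mem_insert_of_mem _ ⟨hyS, h⟩
        · rcases hcompl y hyS with h' | h'
          · exact absurd h' hy
          · exact h' ▸ Set.mem_insert _ _
    have h2 := hdeg x1
    have h3 : (insert x2 A).ncard ≤ A.ncard + 1 := Set.ncard_insert_le _ _
    omega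
  have hBcard : n ≤ 2 * B.ncard + 1 := by
    have h1 : degree Adj x2 ≤ (insert x1 B).ncard := by
      apply degree_le
      intro y hy harcs
      rcases harcs with h | h
      · by_cases hyS : y ∈ S
        · exact Set.mem_insert_of_mem _ ⟨hyS, h⟩
        · rcases hcompl y hyS with h' | h'
          · exact h' ▸ Set.mem_insert _ _
          · exact absurd h' hy
      · exact (hx2in y h) ▸ Set.mem_insert _ _
    have h2 := hdeg x2
    have h3 : (insert x1 B).ncard ≤ B.ncard + 1 := Set.ncard_insert_le _ _
    omega
  -- membership helpers
  have hx1c : ∀ s0 ∈ S, x1 ∈ ({s0}ᶜ : Set V) := fun s0 hs0 h => hx1S ((Set.mem_singleton_iff.1 h) ▸ hs0)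
  have hx2c : ∀ s0 ∈ S, x2 ∈ ({s0}ᶜ : Set V) := fun s0 hs0 h => hx2S ((Set.mem_singleton_iff.1 h) ▸ hs0)
  -- The key expansion lemma: virtual strong connectivity of S \ {s0} gives D - s0 strong
  have E1 : ∀ s0 ∈ S, SOn G (S \ {s0}) → (A \ {s0}).Nonempty → (B \ {s0}).Nonempty →
      SOn Adj {s0}ᶜ := by
    intro s0 hs0 hSOn hA0 hB0
    obtain ⟨a0, ha0A, ha0ne⟩ := hA0
    obtain ⟨b0, hb0B, hb0ne⟩ := hB0
    have ha0ne' : a0 ≠ s0 := ha0ne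
    have hb0ne' : b0 ≠ s0 := hb0ne
    have hmemc : ∀ u, u ∈ S \ {s0} → u ∈ ({s0}ᶜ : Set V) := fun u hu => hu.2
    have core : ∀ u v, u ∈ S \ {s0} → v ∈ S \ {s0} →
        ReflTransGen (RAdj Adj {s0}ᶜ) u v := by
      intro u v hu hv
      refine rtg_expand ?_ (hSOn u hu v hv)
      rintro a b ⟨haM, hbM, hne, harc⟩
      have ha' := hmemc a haM
      have hb' := hmemc b hbM
      rcases harc with h | ⟨haA, hbB⟩
      · exact ReflTransGen.single ⟨ha', hb', h⟩
      · exact ((ReflTransGen.single ⟨ha', hx1c s0 hs0, haA.2⟩).tail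
          ⟨hx1c s0 hs0, hx2c s0 hs0, h12arc⟩).tail ⟨hx2c s0 hs0, hb', hbB.2⟩
    have ha0m : a0 ∈ S \ {s0} := ⟨hAS ha0A, ha0ne⟩
    have hb0m : b0 ∈ S \ {s0} := ⟨hBS hb0B, hb0ne⟩
    apply SOn_of_anchor (a0 := a0) (hmemc a0 ha0m)
    · -- everything reaches a0
      intro u hu
      by_cases huS : u ∈ S
      · exact core u a0 ⟨huS, hu⟩ ha0m
      · have hfromx2 : ReflTransGen (RAdj Adj {s0}ᶜ) x2 a0 :=
          (ReflTransGen.single ⟨hx2c s0 hs0, hmemc b0 hb0m, hb0B.2⟩).trans (core b0 a0 hb0m ha0m)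
        rcases hcompl u huS with h | h
        · subst h
          exact (ReflTransGen.single ⟨hu, hx2c s0 hs0, h12arc⟩).trans hfromx2
        · subst h
          exact hfromx2
    · -- a0 reaches everything
      intro u hu
      by_cases huS : u ∈ S
      · exact core a0 u ha0m ⟨huS, hu⟩
      · have htox1 : ReflTransGen (RAdj Adj {s0}ᶜ) a0 x1 :=
          ReflTransGen.single ⟨hmemc a0 ha0m, hx1c s0 hs0, ha0A.2⟩
        rcases hcompl u huS with h | h
        · subst h; exact htox1
        · subst h
          exact htox1.tail ⟨hx1c s0 hs0, hx2c s0 hs0, h12arc⟩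
  -- ==================== case n = 4 ====================
  by_cases hn4' : n = 4
  · have hS2 : S.ncard = 2 := by omega
    have hAeq : A = S := Set.eq_of_subset_of_ncard_le hAS (by omega)
    have hBeq : B = S := Set.eq_of_subset_of_ncard_le hBS (by omega)
    obtain ⟨c, d, hcd, hScd⟩ := Set.ncard_eq_two.1 hS2
    have hcS : c ∈ S := by rw [hScd]; exact Set.mem_insert _ _
    have hdS : d ∈ S := by rw [hScd]; exact Set.mem_insert_of_mem _ rfl
    have hsd : S \ {c} = {d} := by
      rw [hScd]
      ext u
      simp only [Set.mem_diff, Set.mem_insert_iff, Set.mem_singleton_iff]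
      constructor
      · rintro ⟨(rfl | rfl), hne⟩
        · exact absurd rfl hne
        · rfl
      · rintro rfl
        exact ⟨Or.inr rfl, Ne.symm hcd⟩
    have hSOn : SOn G (S \ {c}) := by
      rw [hsd]
      intro x hx y hy
      rw [Set.mem_singleton_iff] at hx hy
      subst hx; subst hy
      exact .refl
    have hdA : d ∈ A \ {c} := ⟨hAeq.symm ▸ hdS, Ne.symm hcd⟩
    have hdB : d ∈ B \ {c} := ⟨hBeq.symm ▸ hdS, Ne.symm hcd⟩
    exact ⟨c, (noncritical_iff_SOn Adj c).2 (E1 c hcS hSOn ⟨d, hdA⟩ ⟨d, hdB⟩)⟩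
  -- ==================== case n = 5 ====================
  by_cases hn5' : n = 5
  · have hS3 : S.ncard = 3 := by omega
    have hABi : 1 ≤ (A ∩ B).ncard := by
      have h1 := Set.ncard_inter_add_ncard_union A B
      have h2 : (A ∪ B).ncard ≤ S.ncard :=
        Set.ncard_le_ncard (Set.union_subset hAS hBS)
      omega
    by_cases h2AB : 2 ≤ (A ∩ B).ncard
    · obtain ⟨u, huAB, v, hvAB, huv⟩ := (Set.one_lt_ncard (s := A ∩ B)).1 (by omega)
      have h1 : 1 ≤ (S \ {u, v}).ncard := by
        have h2 := Set.le_ncard_diff ({u, v} : Set V) S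
        rw [Set.ncard_pair huv] at h2
        omega
      have h1' : (S \ {u, v}).Nonempty := by
        rw [← Set.ncard_pos]
        omega
      obtain ⟨s0, hs0⟩ := h1'
      have hs0S : s0 ∈ S := hs0.1
      have hs0uv : s0 ≠ u ∧ s0 ≠ v :=
        ⟨fun h => hs0.2 (by rw [h]; exact Set.mem_insert _ _),
         fun h => hs0.2 (by rw [h]; exact Set.mem_insert_of_mem _ rfl)⟩
      have hsd : S \ {s0} = {u, v} := by
        symm
        apply Set.eq_of_subset_of_ncard_le
        · intro w hw
          simp only [Set.mem_insert_iff, Set.mem_singleton_iff] at hw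
          rcases hw with rfl | rfl
          · exact ⟨hAS huAB.1, Ne.symm hs0uv.1⟩
          · exact ⟨hAS hvAB.1, Ne.symm hs0uv.2⟩
        · rw [Set.ncard_diff_singleton_of_mem hs0S, Set.ncard_pair huv]
          omega
        · exact Set.toFinite _
      have hSOn : SOn G (S \ {s0}) := by
        rw [hsd]
        intro x hx y hy
        simp only [Set.mem_insert_iff, Set.mem_singleton_iff] at hx hy
        have hum : u ∈ ({u, v} : Set V) := Set.mem_insert _ _
        have hvm : v ∈ ({u, v} : Set V) := Set.mem_insert_of_mem _ rfl
        rcases hx with rfl | rfl <;> rcases hy with rfl | rfl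
        · exact .refl
        · exact ReflTransGen.single ⟨hum, hvm, huv, Or.inr ⟨huAB.1, hvAB.2⟩⟩
        · exact ReflTransGen.single ⟨hvm, hum, Ne.symm huv, Or.inr ⟨hvAB.1, huAB.2⟩⟩
        · exact .refl
      refine ⟨s0, (noncritical_iff_SOn Adj s0).2
        (E1 s0 hs0S hSOn ⟨u, huAB.1, Ne.symm hs0uv.1⟩ ⟨u, huAB.2, Ne.symm hs0uv.1⟩)⟩
    · -- A ∩ B is a single vertex w
      have hABe : (A ∩ B).ncard = 1 := by omega
      obtain ⟨w, hwABs⟩ := Set.ncard_eq_one.1 hABe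
      have hwAB : w ∈ A ∩ B := by rw [hwABs]; rfl
      have hA2' : A.ncard = 2 := by
        by_contra hne
        have h3 : 3 ≤ A.ncard := by
          have h4 := hAcard
          omega
        have hAeq : A = S := Set.eq_of_subset_of_ncard_le hAS (by omega)
        have h5 : A ∩ B = B := Set.inter_eq_right.2 (hAeq ▸ hBS)
        rw [h5] at hABe
        omega
      have hB2' : B.ncard = 2 := by
        by_contra hne
        have h3 : 3 ≤ B.ncard := by
          have h4 := hBcard
          omega
        have hBeq : B = S := Set.eq_of_subset_of_ncard_le hBS (by omega)
        have h5 : A ∩ B = A := Set.inter_eq_left.2 (hBeq ▸ hAS)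
        rw [h5] at hABe
        omega
      obtain ⟨c, d, hcd, hAcd⟩ := Set.ncard_eq_two.1 hA2'
      have hwin : w = c ∨ w = d := by
        have := hwAB.1
        rw [hAcd] at this
        simpa using this
      obtain ⟨a', hAwa, hane⟩ : ∃ a', A = {w, a'} ∧ a' ≠ w := by
        rcases hwin with h | h
        · refine ⟨d, by rw [hAcd, h], fun he => hcd (h.symm.trans he.symm)⟩
        · refine ⟨c, by rw [hAcd, h]; exact Set.pair_comm c d, fun he => hcd (he.trans h)⟩
      obtain ⟨c2, d2, hcd2, hBcd⟩ := Set.ncard_eq_two.1 hB2'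
      have hwin2 : w = c2 ∨ w = d2 := by
        have := hwAB.2
        rw [hBcd] at this
        simpa using this
      obtain ⟨b', hBwb, hbne⟩ : ∃ b', B = {w, b'} ∧ b' ≠ w := by
        rcases hwin2 with h | h
        · refine ⟨d2, by rw [hBcd, h], fun he => hcd2 (h.symm.trans he.symm)⟩
        · refine ⟨c2, by rw [hBcd, h]; exact Set.pair_comm c2 d2, fun he => hcd2 (he.trans h)⟩
      have ha'A : a' ∈ A := by rw [hAwa]; exact Set.mem_insert_of_mem _ rfl
      have hwA : w ∈ A := hwAB.1
      have hwB : w ∈ B := hwAB.2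
      have hb'B : b' ∈ B := by rw [hBwb]; exact Set.mem_insert_of_mem _ rfl
      have hab : a' ≠ b' := by
        intro h
        have h1 : a' ∈ A ∩ B := ⟨ha'A, h ▸ hb'B⟩
        rw [hwABs] at h1
        exact hane h1
      have hwS : w ∈ S := hAS hwA
      have ha'S : a' ∈ S := hAS ha'A
      have hb'S : b' ∈ S := hBS hb'B
      have h3 : ({w, a', b'} : Set V).ncard = 3 := by
        have hnm : w ∉ ({a', b'} : Set V) := by
          simp only [Set.mem_insert_iff, Set.mem_singleton_iff]
          push_neg
          exact ⟨Ne.symm hane, Ne.symm hbne⟩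
        rw [Set.ncard_insert_of_notMem hnm, Set.ncard_pair hab]
      have hS123 : S = {w, a', b'} := by
        symm
        apply Set.eq_of_subset_of_ncard_le
        · intro q hq
          simp only [Set.mem_insert_iff, Set.mem_singleton_iff] at hq
          rcases hq with rfl | rfl | rfl
          exacts [hwS, ha'S, hb'S]
        · omega
        · exact Set.toFinite _
      -- helper for applying E1 with a 2-element remainder
      have hE : ∀ s0 p q : V, s0 ∈ S → p ∈ A → q ∈ B → S \ {s0} = {p, q} → p ≠ q →
          G p q → G q p → ∃ z : V, Noncritical Adj z := by
        intro s0 p q hs0S hpA hqB hsd hpq hGpq hGqp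
        have hSOn : SOn G (S \ {s0}) := by
          rw [hsd]
          intro x hx y hy
          simp only [Set.mem_insert_iff, Set.mem_singleton_iff] at hx hy
          have hpm : p ∈ ({p, q} : Set V) := Set.mem_insert _ _
          have hqm : q ∈ ({p, q} : Set V) := Set.mem_insert_of_mem _ rfl
          rcases hx with rfl | rfl <;> rcases hy with rfl | rfl
          · exact .refl
          · exact ReflTransGen.single ⟨hpm, hqm, hGpq⟩
          · exact ReflTransGen.single ⟨hqm, hpm, hGqp⟩
          · exact .refl
        have hpne : p ≠ s0 := by
          have : p ∈ S \ {s0} := by rw [hsd]; exact Set.mem_insert _ _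
          exact this.2
        have hqne : q ≠ s0 := by
          have : q ∈ S \ {s0} := by rw [hsd]; exact Set.mem_insert_of_mem _ rfl
          exact this.2
        exact ⟨s0, (noncritical_iff_SOn Adj s0).2
          (E1 s0 hs0S hSOn ⟨p, hpA, hpne⟩ ⟨q, hqB, hqne⟩)⟩
      by_cases hba : Adj b' a'
      · refine hE w a' b' hwS ha'A hb'B ?_ hab ⟨hab, Or.inr ⟨ha'A, hb'B⟩⟩ ⟨Ne.symm hab, Or.inl hba⟩
        rw [hS123]
        ext q
        simp only [Set.mem_diff, Set.mem_insert_iff, Set.mem_singleton_iff]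
        constructor
        · rintro ⟨(rfl | rfl | rfl), hne⟩
          · exact absurd rfl hne
          · exact Or.inl rfl
          · exact Or.inr rfl
        · rintro (rfl | rfl)
          · exact ⟨Or.inr (Or.inl rfl), hane⟩
          · exact ⟨Or.inr (Or.inr rfl), hbne⟩
      · by_cases hbw : Adj b' w
        · refine hE a' w b' ha'S hwA hb'B ?_ (Ne.symm hbne)
            ⟨Ne.symm hbne, Or.inr ⟨hwA, hb'B⟩⟩ ⟨hbne, Or.inl hbw⟩
          rw [hS123]
          ext q
          simp only [Set.mem_diff, Set.mem_insert_iff, Set.mem_singleton_iff]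
          constructor
          · rintro ⟨(rfl | rfl | rfl), hne⟩
            · exact Or.inl rfl
            · exact absurd rfl hne
            · exact Or.inr rfl
          · rintro (rfl | rfl)
            · exact ⟨Or.inl rfl, hane.symm⟩
            · exact ⟨Or.inr (Or.inr rfl), hab.symm⟩
        · by_cases hwa : Adj w a'
          · refine hE b' a' w hb'S ha'A hwB ?_ hane
              ⟨hane, Or.inr ⟨ha'A, hwB⟩⟩ ⟨Ne.symm hane, Or.inl hwa⟩
            rw [hS123]
            ext q
            simp only [Set.mem_diff, Set.mem_insert_iff, Set.mem_singleton_iff]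
            constructor
            · rintro ⟨(rfl | rfl | rfl), hne⟩
              · exact Or.inr rfl
              · exact Or.inl rfl
              · exact absurd rfl hne
            · rintro (rfl | rfl)
              · exact ⟨Or.inr (Or.inl rfl), hab⟩
              · exact ⟨Or.inl rfl, Ne.symm hbne⟩
          · -- contradiction: b' has no out-arc
            exfalso
            obtain ⟨c3, hc3⟩ : ∃ c3, Adj b' c3 := by
              rcases Relation.ReflTransGen.cases_head (hconn b' w) with h | ⟨c3, hc3, _⟩
              · exact absurd h hbne
              · exact ⟨c3, hc3⟩
            by_cases hcS : c3 ∈ S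
            · rw [hS123] at hcS
              simp only [Set.mem_insert_iff, Set.mem_singleton_iff] at hcS
              rcases hcS with rfl | rfl | rfl
              · exact hbw hc3
              · exact hba hc3
              · exact hirr _ hc3
            · rcases hcompl c3 hcS with rfl | rfl
              · have h1 : b' ∈ A := ⟨hb'S, hc3⟩
                rw [hAwa] at h1
                simp only [Set.mem_insert_iff, Set.mem_singleton_iff] at h1
                rcases h1 with h1 | h1
                · exact hbne h1
                · exact hab h1.symm
              · exact hx1S ((hx2in b' hc3) ▸ hb'S)
  -- ==================== case n ≥ 6 ====================
  have hn6 : 6 ≤ n := by omega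
  set NB : V → Set V := fun s => {y | y ∈ S ∧ y ≠ s ∧ (G s y ∨ G y s)} with hNBdef
  by_cases hdefc : ∃ s0, s0 ∈ A ∧ s0 ∈ B ∧ 2 * (NB s0).ncard + 2 ≤ n
  · -- deficient vertex: remove it directly, with bypass through K ∪ {x1, x2}
    obtain ⟨s0, hs0A, hs0B, hsdef⟩ := hdefc
    have hs0S : s0 ∈ S := hAS hs0A
    have hsub1 : (A ∪ B) \ {s0} ⊆ NB s0 := by
      rintro u ⟨huAB, hune⟩
      have hune' : u ≠ s0 := hune
      have huS : u ∈ S := by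
        rcases huAB with h | h
        exacts [hAS h, hBS h]
      refine ⟨huS, hune', ?_⟩
      rcases huAB with h | h
      · exact Or.inr ⟨hune', Or.inr ⟨h, hs0B⟩⟩
      · exact Or.inl ⟨Ne.symm hune', Or.inr ⟨hs0A, h⟩⟩
    have hABcard : 2 * (A ∪ B).ncard ≤ n := by
      have h1 : ((A ∪ B) \ {s0}).ncard = (A ∪ B).ncard - 1 :=
        Set.ncard_diff_singleton_of_mem (Set.mem_union_left _ hs0A)
      have h2 : ((A ∪ B) \ {s0}).ncard ≤ (NB s0).ncard :=
        Set.ncard_le_ncard hsub1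
      have h3 : 0 < (A ∪ B).ncard := by
        rw [Set.ncard_pos]
        exact ⟨s0, Set.mem_union_left _ hs0A⟩
      omega
    have hAuB : A ∪ B = A :=
      ((Set.eq_of_subset_of_ncard_le Set.subset_union_left (by omega))).symm
    have hAB : A = B := by
      have hAuB2 : A ∪ B = B :=
        ((Set.eq_of_subset_of_ncard_le Set.subset_union_right (by omega))).symm
      rw [← hAuB, hAuB2]
    have hKnbr : ∀ u, u ≠ s0 → (Adj s0 u ∨ Adj u s0) → (u ∈ A ∨ u = x1 ∨ u = x2) := by
      intro u hune harcs
      by_cases huS : u ∈ S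
      · by_contra hcon
        push_neg at hcon
        have huNB : u ∈ NB s0 := by
          refine ⟨huS, hune, ?_⟩
          rcases harcs with h | h
          · exact Or.inl ⟨Ne.symm hune, Or.inl h⟩
          · exact Or.inr ⟨hune, Or.inl h⟩
        have hsubK : insert u (A \ {s0}) ⊆ NB s0 := by
          rintro q hq
          rcases hq with rfl | hq2
          · exact huNB
          · exact hsub1 ⟨Set.mem_union_left _ hq2.1, hq2.2⟩
        have hcard1 : (insert u (A \ {s0})).ncard = A.ncard := by
          rw [Set.ncard_insert_of_notMem (fun h => hcon.1 h.1),
            Set.ncard_diff_singleton_of_mem hs0A]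
          have h4 : 1 ≤ A.ncard := by
            rw [Nat.succ_le_iff, Set.ncard_pos]
            exact ⟨s0, hs0A⟩
          omega
        have h5 := Set.ncard_le_ncard hsubK
        omega
      · rcases hcompl u huS with h | h
        exacts [Or.inr (Or.inl h), Or.inr (Or.inr h)]
    obtain ⟨k0, hk0A, hk0ne⟩ := Set.exists_ne_of_one_lt_ncard (by omega : 1 < A.ncard) s0
    have hbyp : SOn Adj {s0}ᶜ := by
      apply bypass_strong hconn hirr s0
      intro w w' hws0 hs0w' hw hw'
      have hm : ∀ u : V, u ≠ s0 → u ∈ ({s0}ᶜ : Set V) :=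
        fun u hu h => hu (Set.mem_singleton_iff.1 h)
      have hx1m : x1 ∈ ({s0}ᶜ : Set V) := hm x1 (fun h => hx1S (h ▸ hs0S))
      have hx2m : x2 ∈ ({s0}ᶜ : Set V) := hm x2 (fun h => hx2S (h ▸ hs0S))
      have hk0m : k0 ∈ ({s0}ᶜ : Set V) := hm k0 hk0ne
      have hwK : w ∈ A ∨ w = x2 := by
        rcases hKnbr w hw (Or.inr hws0) with h | h | h
        · exact Or.inl h
        · exfalso
          subst h
          exact hx2S ((hx1out s0 hws0) ▸ hs0S)
        · exact Or.inr h
      have hw'K : w' ∈ A ∨ w' = x1 := by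
        rcases hKnbr w' hw' (Or.inl hs0w') with h | h | h
        · exact Or.inl h
        · exact Or.inr h
        · exfalso
          subst h
          exact hx1S ((hx2in s0 hs0w') ▸ hs0S)
      rcases hwK with hwA | rfl
      · rcases hw'K with hw'A | rfl
        · exact ((ReflTransGen.single ⟨hm w hw, hx1m, hwA.2⟩).tail
            ⟨hx1m, hx2m, h12arc⟩).tail ⟨hx2m, hm w' hw', (hAB ▸ hw'A : w' ∈ B).2⟩
        · exact ReflTransGen.single ⟨hm w hw, hx1m, hwA.2⟩
      · rcases hw'K with hw'A | rfl
        · exact ReflTransGen.single ⟨hx2m, hm w' hw', (hAB ▸ hw'A : w' ∈ B).2⟩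
        · exact (ReflTransGen.single ⟨hx2m, hk0m, (hAB ▸ hk0A : k0 ∈ B).2⟩).tail
            ⟨hk0m, hx1m, hk0A.2⟩
    exact ⟨s0, (noncritical_iff_SOn Adj s0).2 hbyp⟩
  · -- no deficient vertex: recurse on the virtual digraph on S
    push_neg at hdefc
    haveI : Fintype ↥S := S.toFinite.fintype
    have hcardsub : Fintype.card ↥S = S.ncard := by
      rw [← Nat.card_coe_set_eq, Nat.card_eq_fintype_card]
    set AdjG : ↥S → ↥S → Prop := fun a b => G a.1 b.1 with hAdjGdef
    have hGirr : ∀ a : ↥S, ¬ AdjG a a := fun a h => h.1 rfl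
    have hGconn : IsStronglyConnected AdjG := by
      intro a b
      have h1 := hS a.1 a.2 b.1 b.2
      have h2 : ReflTransGen (fun u v => u ∈ S ∧ v ∈ S ∧ G u v) a.1 b.1 := by
        refine ReflTransGen.mono (r := RAdj Adj S) ?_ _ _ h1
        rintro u v ⟨hu, hv, huv⟩
        exact ⟨hu, hv, fun he => hirr u (he ▸ huv), Or.inl huv⟩
      exact rtg_toSubtype h2 a.2 b.2
    have hdegG : ∀ s : ↥S, degree AdjG s = (NB s.1).ncard := by
      intro s
      have himg : Subtype.val '' {y : ↥S | y ≠ s ∧ (AdjG s y ∨ AdjG y s)} = NB s.1 := by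
        ext u
        simp only [Set.mem_image, Set.mem_setOf_eq]
        constructor
        · rintro ⟨y, ⟨hne, hor⟩, rfl⟩
          exact ⟨y.2, fun h => hne (Subtype.ext h), hor⟩
        · rintro ⟨huS, hne, hor⟩
          exact ⟨⟨u, huS⟩, ⟨fun h => hne (congrArg Subtype.val h), hor⟩, rfl⟩
      rw [degree, ← himg, Set.ncard_image_of_injective _ Subtype.val_injective]
    have hdegG' : ∀ s : ↥S, Fintype.card ↥S + 1 ≤ 2 * degree AdjG s := by
      intro s
      rw [hcardsub, hdegG s]
      by_cases hsA : s.1 ∈ A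
      · by_cases hsB : s.1 ∈ B
        · have := hdefc s.1 hsA hsB
          omega
        · have hsub : {y | y ≠ s.1 ∧ (Adj s.1 y ∨ Adj y s.1)} ⊆ insert x1 (NB s.1) := by
            rintro u ⟨hune, hor⟩
            by_cases huS : u ∈ S
            · refine Set.mem_insert_of_mem _ ⟨huS, hune, ?_⟩
              rcases hor with h | h
              · exact Or.inl ⟨Ne.symm hune, Or.inl h⟩
              · exact Or.inr ⟨hune, Or.inl h⟩
            · rcases hcompl u huS with rfl | rfl
              · exact Set.mem_insert _ _
              · exfalso
                rcases hor with h | h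
                · exact hx1S ((hx2in s.1 h) ▸ s.2)
                · exact hsB ⟨s.2, h⟩
          have h1 : degree Adj s.1 ≤ (insert x1 (NB s.1)).ncard :=
            degree_le Adj s.1 (fun y hy harcs => hsub ⟨hy, harcs⟩)
          have h2 := hdeg s.1
          have h3 : (insert x1 (NB s.1)).ncard ≤ (NB s.1).ncard + 1 := Set.ncard_insert_le _ _
          have h4 := hcardS
          omega
      · by_cases hsB : s.1 ∈ B
        · have hsub : {y | y ≠ s.1 ∧ (Adj s.1 y ∨ Adj y s.1)} ⊆ insert x2 (NB s.1) := by
            rintro u ⟨hune, hor⟩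
            by_cases huS : u ∈ S
            · refine Set.mem_insert_of_mem _ ⟨huS, hune, ?_⟩
              rcases hor with h | h
              · exact Or.inl ⟨Ne.symm hune, Or.inl h⟩
              · exact Or.inr ⟨hune, Or.inl h⟩
            · rcases hcompl u huS with rfl | rfl
              · exfalso
                rcases hor with h | h
                · exact hsA ⟨s.2, h⟩
                · exact hx2S ((hx1out s.1 h) ▸ s.2)
              · exact Set.mem_insert _ _
          have h1 : degree Adj s.1 ≤ (insert x2 (NB s.1)).ncard :=
            degree_le Adj s.1 (fun y hy harcs => hsub ⟨hy, harcs⟩)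
          have h2 := hdeg s.1
          have h3 : (insert x2 (NB s.1)).ncard ≤ (NB s.1).ncard + 1 := Set.ncard_insert_le _ _
          have h4 := hcardS
          omega
        · have hsub : {y | y ≠ s.1 ∧ (Adj s.1 y ∨ Adj y s.1)} ⊆ NB s.1 := by
            rintro u ⟨hune, hor⟩
            by_cases huS : u ∈ S
            · refine ⟨huS, hune, ?_⟩
              rcases hor with h | h
              · exact Or.inl ⟨Ne.symm hune, Or.inl h⟩
              · exact Or.inr ⟨hune, Or.inl h⟩
            · exfalso
              rcases hcompl u huS with rfl | rfl
              · rcases hor with h | h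
                · exact hsA ⟨s.2, h⟩
                · exact hx2S ((hx1out s.1 h) ▸ s.2)
              · rcases hor with h | h
                · exact hx1S ((hx2in s.1 h) ▸ s.2)
                · exact hsB ⟨s.2, h⟩
          have h1 : degree Adj s.1 ≤ (NB s.1).ncard :=
            degree_le Adj s.1 (fun y hy harcs => hsub ⟨hy, harcs⟩)
          have h2 := hdeg s.1
          have h4 := hcardS
          omega
    have hcard4' : 4 ≤ Fintype.card ↥S := by rw [hcardsub]; omega
    have hlt : Fintype.card ↥S < n := by rw [hcardsub]; omega
    obtain ⟨v, hv⟩ := IH ↥S AdjG hGirr hcard4' hlt hGconn hdegG'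
    have h1 : SOn AdjG ({v}ᶜ : Set ↥S) := (noncritical_iff_SOn AdjG v).1 hv
    have h2 : SOn G (Subtype.val '' ({v}ᶜ : Set ↥S)) := SOn_val_image h1
    have himg : Subtype.val '' ({v}ᶜ : Set ↥S) = S \ {v.1} := by
      ext u
      simp only [Set.mem_image, Set.mem_compl_iff, Set.mem_singleton_iff, Set.mem_diff]
      constructor
      · rintro ⟨y, hy, rfl⟩
        exact ⟨y.2, fun h => hy (Subtype.ext h)⟩
      · rintro ⟨huS, hne⟩
        exact ⟨⟨u, huS⟩, fun h => hne (congrArg Subtype.val h), rfl⟩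
    rw [himg] at h2
    obtain ⟨wa, hwaA, hwane⟩ := Set.exists_ne_of_one_lt_ncard (by omega : 1 < A.ncard) v.1
    obtain ⟨wb, hwbB, hwbne⟩ := Set.exists_ne_of_one_lt_ncard (by omega : 1 < B.ncard) v.1
    exact ⟨v.1, (noncritical_iff_SOn Adj v.1).2
      (E1 v.1 v.2 h2 ⟨wa, hwaA, hwane⟩ ⟨wb, hwbB, hwbne⟩)⟩

end MainProof

theorem exists_noncritical_aux :
    ∀ (n : ℕ) {V : Type u_1} [Fintype V] (Adj : V → V → Prop),
      (∀ x : V, ¬ Adj x x) → 4 ≤ n → Fintype.card V = n → IsStronglyConnected Adj →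
      (∀ x : V, n + 1 ≤ 2 * degree Adj x) → ∃ v : V, Noncritical Adj v := by
  intro n
  induction n using Nat.strong_induction_on with
  | _ n IH =>
  intro V _ Adj hirr hn4 hcard hconn hdeg
  classical
  haveI : Nonempty V := by
    rw [← Fintype.card_pos_iff]
    omega
  -- a maximum proper strongly connected subset S
  have hgood : ∃ T : Set V, T.Nonempty ∧ T ≠ Set.univ ∧ SOn Adj T := by
    obtain ⟨v⟩ := (inferInstance : Nonempty V)
    obtain ⟨w, hw⟩ := Fintype.exists_ne_of_one_lt_card (by omega) v
    refine ⟨{v}, ⟨v, rfl⟩, fun h => hw ?_, ?_⟩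
    · have h2 : w ∈ ({v} : Set V) := h ▸ Set.mem_univ w
      exact h2
    · intro x hx y hy
      rw [Set.mem_singleton_iff] at hx hy
      subst hx; subst hy
      exact .refl
  set Ks : Set ℕ := {k | ∃ T : Set V, (T.Nonempty ∧ T ≠ Set.univ ∧ SOn Adj T) ∧ T.ncard = k}
    with hKs
  have hKne : Ks.Nonempty := by
    obtain ⟨T, hT⟩ := hgood
    exact ⟨T.ncard, T, hT, rfl⟩
  have hKbdd : BddAbove Ks := by
    refine ⟨n, ?_⟩
    rintro k ⟨T, hT, rfl⟩
    calc T.ncard ≤ (Set.univ : Set V).ncard := Set.ncard_le_ncard (Set.subset_univ T)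
    _ = n := by rw [Set.ncard_univ, Nat.card_eq_fintype_card, hcard]
  obtain ⟨S, ⟨hSne, hSproper, hS⟩, hSsup⟩ :
      ∃ T : Set V, (T.Nonempty ∧ T ≠ Set.univ ∧ SOn Adj T) ∧ T.ncard = sSup Ks :=
    Nat.sSup_mem hKne hKbdd
  have hmax : ∀ T : Set V, T.Nonempty → T ≠ Set.univ → SOn Adj T → T.ncard ≤ S.ncard := by
    intro T h1 h2 h3
    rw [hSsup]
    exact le_csSup hKbdd ⟨T, ⟨h1, h2, h3⟩, rfl⟩
  obtain ⟨m, f, hm0, hfS, hinj, harc, ⟨s₀, hs₀S, hs₀⟩, ⟨b₀, hb₀S, hb₀⟩⟩ :=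
    exists_handle hconn hSne hSproper
  have hSwalk : ∀ U : Set V, S ⊆ U → ∀ x ∈ S, ∀ y ∈ S, ReflTransGen (RAdj Adj U) x y :=
    fun U hSU x hx y hy => rtg_mono_set hSU (hS x hx y hy)
  have hmaxviol : ∀ U : Set V, SOn Adj U → S ⊆ U → (∃ w, w ∈ U ∧ w ∉ S) →
      (∃ w', w' ∉ U) → False := by
    rintro U hU hSU ⟨w, hwU, hwS⟩ ⟨w', hw'⟩
    have h1 : U.ncard ≤ S.ncard := hmax U ⟨w, hwU⟩ (fun h => hw' (h ▸ Set.mem_univ w')) hU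
    have h2 : S.ncard < U.ncard :=
      Set.ncard_lt_ncard ((Set.ssubset_iff_of_subset hSU).2 ⟨w, hwU, hwS⟩)
    omega
  -- the handle covers the complement of S
  have hTfull : SOn Adj (S ∪ f '' Set.Iio m) := by
    have hsub : ∀ t, t < m → f t ∈ S ∪ f '' Set.Iio m :=
      fun t ht => Set.mem_union_right _ ⟨t, ht, rfl⟩
    apply SOn_of_anchor (a0 := s₀) (Set.mem_union_left _ hs₀S)
    · rintro u (huS | ⟨t, ht, rfl⟩)
      · exact hSwalk _ Set.subset_union_left u huS s₀ hs₀S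
      · have ht' : t < m := ht
        have h1 : ReflTransGen (RAdj Adj (S ∪ f '' Set.Iio m)) (f t) (f (m - 1)) :=
          segment_walk harc _ (by omega) (by omega) (fun r hr hr' => hsub r (by omega))
        exact (h1.tail ⟨hsub _ (by omega), Set.mem_union_left _ hb₀S, hb₀⟩).trans
          (hSwalk _ Set.subset_union_left b₀ hb₀S s₀ hs₀S)
    · rintro u (huS | ⟨t, ht, rfl⟩)
      · exact hSwalk _ Set.subset_union_left s₀ hs₀S u huS
      · have ht' : t < m := ht
        refine ReflTransGen.trans
          (ReflTransGen.single ⟨Set.mem_union_left _ hs₀S, hsub 0 hm0, hs₀⟩) ?_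
        exact segment_walk harc _ (Nat.zero_le t) ht' (fun r _ hr' => hsub r (by omega))
  have hcover : ∀ u, u ∉ S → ∃ t, t < m ∧ f t = u := by
    intro u huS
    by_contra hcon
    push_neg at hcon
    apply hmaxviol (S ∪ f '' Set.Iio m) hTfull Set.subset_union_left
      ⟨f 0, Set.mem_union_right _ ⟨0, hm0, rfl⟩, hfS 0 hm0⟩
    refine ⟨u, ?_⟩
    rintro (h | ⟨t, ht, rfl⟩)
    · exact huS h
    · exact hcon t ht rfl
  have hIio : (Set.Iio m).ncard = m := by
    rw [← Finset.coe_range, Set.ncard_coe_finset, Finset.card_range]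
  have hcount : S.ncard + m = n := by
    have h1 : S ∪ f '' Set.Iio m = Set.univ := by
      ext u
      simp only [Set.mem_univ, iff_true]
      by_cases huS : u ∈ S
      · exact Set.mem_union_left _ huS
      · obtain ⟨t, ht, rfl⟩ := hcover u huS
        exact Set.mem_union_right _ ⟨t, ht, rfl⟩
    have h2 : (f '' Set.Iio m).ncard = m := by
      have hinj' : Set.InjOn f (Set.Iio m) := fun a ha b hb hab => hinj a b ha hb hab
      rw [Set.ncard_image_of_injOn hinj', hIio]
    have h3 : Disjoint S (f '' Set.Iio m) := by
      rw [Set.disjoint_right]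
      rintro u ⟨t, ht, rfl⟩
      exact hfS t ht
    have h4 := Set.ncard_union_eq h3
    rw [h1, Set.ncard_univ, Nat.card_eq_fintype_card, hcard, h2] at h4
    omega
  -- structural lemmas about the handle
  have hL2 : ∀ t, t < m → ∀ s ∈ S, Adj s (f t) → t = 0 := by
    intro t ht s hsS harc0
    by_contra ht0
    set U : Set V := S ∪ f '' Set.Icc t (m - 1) with hU
    have hsub : ∀ r, t ≤ r → r ≤ m - 1 → f r ∈ U :=
      fun r h1 h2 => Set.mem_union_right _ ⟨r, ⟨h1, h2⟩, rfl⟩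
    have hUS : SOn Adj U := by
      apply SOn_of_anchor (a0 := s₀) (Set.mem_union_left _ hs₀S)
      · rintro u (huS | ⟨r, hr, rfl⟩)
        · exact hSwalk _ Set.subset_union_left u huS s₀ hs₀S
        · have hr1 := (Set.mem_Icc.1 hr).1
          have hr2 := (Set.mem_Icc.1 hr).2
          have h1 : ReflTransGen (RAdj Adj U) (f r) (f (m - 1)) :=
            segment_walk harc _ hr2 (by omega) (fun q hq hq' => hsub q (by omega) hq')
          exact (h1.tail ⟨hsub (m-1) (by omega) le_rfl, Set.mem_union_left _ hb₀S, hb₀⟩).trans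
            (hSwalk _ Set.subset_union_left b₀ hb₀S s₀ hs₀S)
      · rintro u (huS | ⟨r, hr, rfl⟩)
        · exact hSwalk _ Set.subset_union_left s₀ hs₀S u huS
        · have hr1 := (Set.mem_Icc.1 hr).1
          have hr2 := (Set.mem_Icc.1 hr).2
          refine ReflTransGen.trans (hSwalk _ Set.subset_union_left s₀ hs₀S s hsS) ?_
          refine ReflTransGen.trans (ReflTransGen.single
            ⟨Set.mem_union_left _ hsS, hsub t le_rfl (by omega), harc0⟩) ?_
          exact segment_walk harc _ hr1 (by omega) (fun q hq hq' => hsub q hq (by omega))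
    apply hmaxviol U hUS Set.subset_union_left ⟨f t, hsub t le_rfl (by omega), hfS t ht⟩
    refine ⟨f 0, ?_⟩
    rintro (h | ⟨r, hr, heq⟩)
    · exact hfS 0 hm0 h
    · have hr1 := (Set.mem_Icc.1 hr).1
      have hr2 := (Set.mem_Icc.1 hr).2
      have := hinj r 0 (by omega) hm0 heq
      omega
  have hL3 : ∀ t, t < m → ∀ s ∈ S, Adj (f t) s → t = m - 1 := by
    intro t ht s hsS harc0
    by_contra htm
    have ht1 : t + 1 < m := by omega
    set U : Set V := S ∪ f '' Set.Icc 0 t with hU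
    have hsub : ∀ r, r ≤ t → f r ∈ U :=
      fun r h2 => Set.mem_union_right _ ⟨r, ⟨Nat.zero_le r, h2⟩, rfl⟩
    have hUS : SOn Adj U := by
      apply SOn_of_anchor (a0 := s₀) (Set.mem_union_left _ hs₀S)
      · rintro u (huS | ⟨r, hr, rfl⟩)
        · exact hSwalk _ Set.subset_union_left u huS s₀ hs₀S
        · have hr2 := (Set.mem_Icc.1 hr).2
          have h1 : ReflTransGen (RAdj Adj U) (f r) (f t) :=
            segment_walk harc _ hr2 (by omega) (fun q hq hq' => hsub q hq')
          exact (h1.tail ⟨hsub t le_rfl, Set.mem_union_left _ hsS, harc0⟩).trans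
            (hSwalk _ Set.subset_union_left s hsS s₀ hs₀S)
      · rintro u (huS | ⟨r, hr, rfl⟩)
        · exact hSwalk _ Set.subset_union_left s₀ hs₀S u huS
        · have hr2 := (Set.mem_Icc.1 hr).2
          refine ReflTransGen.trans (ReflTransGen.single
            ⟨Set.mem_union_left _ hs₀S, hsub 0 (Nat.zero_le t), hs₀⟩) ?_
          exact segment_walk harc _ (Nat.zero_le r) (by omega) (fun q hq hq' => hsub q (by omega))
    apply hmaxviol U hUS Set.subset_union_left ⟨f 0, hsub 0 (Nat.zero_le t), hfS 0 hm0⟩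
    refine ⟨f (m - 1), ?_⟩
    rintro (h | ⟨r, hr, heq⟩)
    · exact hfS (m - 1) (by omega) h
    · have hr2 := (Set.mem_Icc.1 hr).2
      have := hinj r (m - 1) (by omega) (by omega) heq
      omega
  have hL1 : ∀ t t', t + 1 < t' → t' < m → ¬ Adj (f t) (f t') := by
    intro t t' htt' ht'm hadj
    set U : Set V := (S ∪ f '' Set.Icc 0 t) ∪ f '' Set.Icc t' (m - 1) with hU
    have hsub1 : ∀ r, r ≤ t → f r ∈ U :=
      fun r h => Set.mem_union_left _ (Set.mem_union_right _ ⟨r, ⟨Nat.zero_le r, h⟩, rfl⟩)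
    have hsub2 : ∀ r, t' ≤ r → r ≤ m - 1 → f r ∈ U :=
      fun r h1 h2 => Set.mem_union_right _ ⟨r, ⟨h1, h2⟩, rfl⟩
    have hSU : S ⊆ U := fun u hu => Set.mem_union_left _ (Set.mem_union_left _ hu)
    have hUS : SOn Adj U := by
      apply SOn_of_anchor (a0 := s₀) (hSU hs₀S)
      · rintro u ((huS | ⟨r, hr, rfl⟩) | ⟨r, hr, rfl⟩)
        · exact hSwalk _ hSU u huS s₀ hs₀S
        · have hr2 := (Set.mem_Icc.1 hr).2
          have w1 : ReflTransGen (RAdj Adj U) (f r) (f t) :=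
            segment_walk harc _ hr2 (by omega) (fun q hq hq' => hsub1 q hq')
          have w2 : ReflTransGen (RAdj Adj U) (f t') (f (m-1)) :=
            segment_walk harc _ (by omega) (by omega) (fun q hq hq' => hsub2 q hq hq')
          exact (((w1.tail ⟨hsub1 t le_rfl, hsub2 t' le_rfl (by omega), hadj⟩).trans
            w2).tail ⟨hsub2 (m-1) (by omega) le_rfl, hSU hb₀S, hb₀⟩).trans
            (hSwalk _ hSU b₀ hb₀S s₀ hs₀S)
        · have hr1 := (Set.mem_Icc.1 hr).1
          have hr2 := (Set.mem_Icc.1 hr).2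
          have w2 : ReflTransGen (RAdj Adj U) (f r) (f (m-1)) :=
            segment_walk harc _ hr2 (by omega) (fun q hq hq' => hsub2 q (by omega) hq')
          exact (w2.tail ⟨hsub2 (m-1) (by omega) le_rfl, hSU hb₀S, hb₀⟩).trans
            (hSwalk _ hSU b₀ hb₀S s₀ hs₀S)
      · rintro u ((huS | ⟨r, hr, rfl⟩) | ⟨r, hr, rfl⟩)
        · exact hSwalk _ hSU s₀ hs₀S u huS
        · have hr2 := (Set.mem_Icc.1 hr).2
          exact (ReflTransGen.single ⟨hSU hs₀S, hsub1 0 (Nat.zero_le t), hs₀⟩).trans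
            (segment_walk harc _ (Nat.zero_le r) (by omega) (fun q _ hq' => hsub1 q (by omega)))
        · have hr1 := (Set.mem_Icc.1 hr).1
          have hr2 := (Set.mem_Icc.1 hr).2
          have w1 : ReflTransGen (RAdj Adj U) (f 0) (f t) :=
            segment_walk harc _ (Nat.zero_le t) (by omega) (fun q _ hq' => hsub1 q hq')
          have w2 : ReflTransGen (RAdj Adj U) (f t') (f r) :=
            segment_walk harc _ hr1 (by omega) (fun q hq hq' => hsub2 q hq (by omega))
          exact ((ReflTransGen.single ⟨hSU hs₀S, hsub1 0 (Nat.zero_le t), hs₀⟩).trans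
            ((w1.tail ⟨hsub1 t le_rfl, hsub2 t' le_rfl (by omega), hadj⟩))).trans w2
    apply hmaxviol U hUS hSU ⟨f 0, hsub1 0 (Nat.zero_le t), hfS 0 hm0⟩
    refine ⟨f (t+1), ?_⟩
    rintro ((h | ⟨r, hr, heq⟩) | ⟨r, hr, heq⟩)
    · exact hfS (t+1) (by omega) h
    · have hr2 := (Set.mem_Icc.1 hr).2
      have := hinj r (t+1) (by omega) (by omega) heq
      omega
    · have hr1 := (Set.mem_Icc.1 hr).1
      have hr2 := (Set.mem_Icc.1 hr).2
      have := hinj r (t+1) (by omega) (by omega) heq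
      omega
  have hL4 : ∀ t t', t < t' → t' < m → Adj (f t') (f t) → t' + 1 ≤ S.ncard + t := by
    intro t t' htt' ht'm hadj
    set U : Set V := f '' Set.Icc t t' with hU
    have hsub : ∀ r, t ≤ r → r ≤ t' → f r ∈ U := fun r h1 h2 => ⟨r, ⟨h1, h2⟩, rfl⟩
    have hUS : SOn Adj U := by
      apply SOn_of_anchor (a0 := f t) (hsub t le_rfl (by omega))
      · rintro u ⟨r, hr, rfl⟩
        have hr1 := (Set.mem_Icc.1 hr).1
        have hr2 := (Set.mem_Icc.1 hr).2
        have w1 : ReflTransGen (RAdj Adj U) (f r) (f t') :=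
          segment_walk harc _ hr2 ht'm (fun q hq hq' => hsub q (by omega) hq')
        exact w1.tail ⟨hsub t' (by omega) le_rfl, hsub t le_rfl (by omega), hadj⟩
      · rintro u ⟨r, hr, rfl⟩
        have hr1 := (Set.mem_Icc.1 hr).1
        have hr2 := (Set.mem_Icc.1 hr).2
        exact segment_walk harc _ hr1 (by omega) (fun q hq hq' => hsub q hq (by omega))
    have hUne : U ≠ Set.univ := by
      intro h
      have h2 : s₀ ∈ U := h ▸ Set.mem_univ s₀
      obtain ⟨r, hr, heq⟩ := h2
      have hr2 := (Set.mem_Icc.1 hr).2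
      exact hfS r (by omega) (heq ▸ hs₀S)
    have h1 : U.ncard ≤ S.ncard := hmax U ⟨f t, hsub t le_rfl (by omega)⟩ hUne hUS
    have h2 : U.ncard = t' + 1 - t := by
      have hinj' : Set.InjOn f (Set.Icc t t') := fun a ha b hb hab =>
        hinj a b (lt_of_le_of_lt (Set.mem_Icc.1 ha).2 ht'm)
          (lt_of_le_of_lt (Set.mem_Icc.1 hb).2 ht'm) hab
      rw [hU, Set.ncard_image_of_injOn hinj', ← Finset.coe_Icc, Set.ncard_coe_finset,
        Nat.card_Icc]
    omega
  -- dispatch on the handle length m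
  by_cases hm1 : m = 1
  · refine ⟨f 0, (noncritical_iff_SOn Adj (f 0)).2 ?_⟩
    have hSc : ({f 0}ᶜ : Set V) = S := by
      ext u
      simp only [Set.mem_compl_iff, Set.mem_singleton_iff]
      constructor
      · intro h
        by_contra huS
        obtain ⟨t, ht, rfl⟩ := hcover u huS
        have ht0 : t = 0 := by omega
        exact h (by rw [ht0])
      · intro huS h
        exact hfS 0 hm0 (h ▸ huS)
    rw [hSc]
    exact hS
  by_cases hm2 : m = 2
  · subst hm2
    refine m2_case (x1 := f 0) (x2 := f 1) hirr hconn
      (fun x => by rw [hcard]; exact hdeg x) hS hSne (by rw [hcard]; exact hn4)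
      (hfS 0 hm0) (hfS 1 (by omega)) ?_ ?_ (harc 0 (by omega)) ?_ ?_ ?_
    · intro h
      have := hinj 0 1 hm0 (by omega) h
      omega
    · intro u hu
      obtain ⟨t, ht, rfl⟩ := hcover u hu
      have h01 : t = 0 ∨ t = 1 := by omega
      rcases h01 with rfl | rfl
      · exact Or.inl rfl
      · exact Or.inr rfl
    · intro u h
      by_cases huS : u ∈ S
      · have h2 := hL3 0 (by omega) u huS h
        omega
      · obtain ⟨t, ht, rfl⟩ := hcover u huS
        have h01 : t = 0 ∨ t = 1 := by omega
        rcases h01 with rfl | rfl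
        · exact absurd h (hirr _)
        · rfl
    · intro u h
      by_cases huS : u ∈ S
      · have h2 := hL2 1 (by omega) u huS h
        omega
      · obtain ⟨t, ht, rfl⟩ := hcover u huS
        have h01 : t = 0 ∨ t = 1 := by omega
        rcases h01 with rfl | rfl
        · rfl
        · exact absurd h (hirr _)
    · intro W _ AdjW h1 h2 h3 h4 h5
      rw [hcard] at h3
      exact IH (Fintype.card W) h3 AdjW h1 h2 rfl h4 h5
  · -- m ≥ 3 : contradiction with the degree of f 1
    exfalso
    have hm3 : 3 ≤ m := by omega
    set J : Set ℕ := {j | j < m ∧ j ≠ 1 ∧ (j ≤ 2 ∨ j ≤ S.ncard)} with hJ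
    have hJfin : J.Finite := Set.Finite.subset (Set.finite_Iio m) (fun j hj => hj.1)
    have hnbr : {y | y ≠ f 1 ∧ (Adj (f 1) y ∨ Adj y (f 1))} ⊆ f '' J := by
      rintro u ⟨hune, hor⟩
      have huS : u ∉ S := by
        intro huS
        rcases hor with h | h
        · have h2 := hL3 1 (by omega) u huS h
          omega
        · have h2 := hL2 1 (by omega) u huS h
          omega
      obtain ⟨t, ht, rfl⟩ := hcover u huS
      have ht1 : t ≠ 1 := fun h => hune (by rw [h])
      refine ⟨t, ⟨ht, ht1, ?_⟩, rfl⟩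
      rcases hor with h | h
      · left
        by_contra h3
        exact hL1 1 t (by omega) ht h
      · by_cases h2 : t ≤ 2
        · exact Or.inl h2
        · right
          have h3 := hL4 1 t (by omega) ht h
          omega
    have hdegb : degree Adj (f 1) ≤ J.ncard := by
      calc degree Adj (f 1) ≤ (f '' J).ncard :=
            Set.ncard_le_ncard hnbr (hJfin.image f)
      _ ≤ J.ncard := Set.ncard_image_le hJfin
    have hb1 : J.ncard ≤ m - 1 := by
      have hsub : J ⊆ Set.Iio m \ {1} :=
        fun j hj => ⟨Set.mem_Iio.2 hj.1, fun h => hj.2.1 h⟩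
      have h2 : J.ncard ≤ (Set.Iio m \ {1}).ncard :=
        Set.ncard_le_ncard hsub (Set.finite_Iio m).diff
      rw [Set.ncard_diff_singleton_of_mem (Set.mem_Iio.2 (by omega)),
        hIio] at h2
      omega
    have hb2 : J.ncard ≤ max 2 S.ncard := by
      have hsub : J ⊆ insert 0 (Set.Icc 2 (max 2 S.ncard)) := by
        intro j hj
        rcases Nat.eq_zero_or_pos j with rfl | hj0
        · exact Set.mem_insert _ _
        · refine Set.mem_insert_of_mem _ ?_
          rw [Set.mem_Icc]
          refine ⟨?_, ?_⟩
          · have := hj.2.1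
            omega
          · rcases hj.2.2 with h | h
            · exact le_trans h (le_max_left _ _)
            · exact le_trans h (le_max_right _ _)
      have h2 : J.ncard ≤ (insert 0 (Set.Icc 2 (max 2 S.ncard))).ncard :=
        Set.ncard_le_ncard hsub (Set.Finite.insert 0 (Set.finite_Icc 2 (max 2 S.ncard)))
      have h3 : (insert 0 (Set.Icc 2 (max 2 S.ncard))).ncard ≤
          (Set.Icc 2 (max 2 S.ncard)).ncard + 1 := Set.ncard_insert_le _ _
      have h4 : (Set.Icc 2 (max 2 S.ncard)).ncard = max 2 S.ncard - 1 := by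
        rw [← Finset.coe_Icc, Set.ncard_coe_finset, Nat.card_Icc]
        omega
      have h5 : 2 ≤ max 2 S.ncard := le_max_left _ _
      omega
    have hmax2 : max 2 S.ncard ≤ S.ncard + 1 := by
      have hk1 : 1 ≤ S.ncard := by
        rw [Nat.succ_le_iff, Set.ncard_pos]
        exact hSne
      exact max_le (by omega) (by omega)
    have hdg := hdeg (f 1)
    omega


theorem exists_noncritical_of_min_degree
    {V : Type*} [Fintype V] (Adj : V → V → Prop)
    (hirr : ∀ x : V, ¬ Adj x x)
    (hcard : 4 ≤ Fintype.card V)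
    (hconn : IsStronglyConnected Adj)
    (hdeg : ∀ x : V, Fintype.card V + 1 ≤ 2 * degree Adj x) :
    ∃ v : V, Noncritical Adj v :=
  exists_noncritical_aux (Fintype.card V) Adj hirr hcard rfl hconn hdeg
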